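/- Let R be a commutative ring, s ∈ R, M an arbitrary R-module, and C an s-contramodule R-module. Then Hom_R(M, C) is an s-contramodule. -/

import Mathlib

noncomputable section ContraAux
namespace ContraAux
variable (R : Type) [CommRing R] (s : R)
abbrev L := Localization.Away s
abbrev F := ℕ →₀ R
def u (n : ℕ) : L R s := Localization.mk 1 ⟨s ^ n, n, rfl⟩
lemma smul_u (n : ℕ) : s • u R s (n + 1) = u R s n := by
  rw [u, u, Localization.smul_mk, Localization.mk_eq_mk_iff]
  apply Localization.r_of_eq
  simp [pow_succ, mul_comm]
def d : F R →ₗ[R] F R := LinearMap.id - s • Finsupp.lmapDomain R R Nat.succ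
lemma d_apply_zero (x : F R) : d R s x 0 = x 0 := by
  simp [d, Finsupp.mapDomain_notin_range, Set.range, Nat.succ_ne_zero]
lemma d_apply_succ (x : F R) (n : ℕ) : d R s x (n + 1) = x (n + 1) - s * x n := by
  have : Finsupp.mapDomain Nat.succ x (n + 1) = x n :=
    Finsupp.mapDomain_apply Nat.succ_injective x n
  simp [d, this]
def π : F R →ₗ[R] L R s :=
  Finsupp.lsum ℕ fun n => LinearMap.toSpanSingleton R _ (u R s n)
lemma π_single (n : ℕ) (r : R) : π R s (Finsupp.single n r) = r • u R s n := by
  simp [π]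

lemma d_single (n : ℕ) :
    d R s (Finsupp.single n 1) = Finsupp.single n 1 - s • Finsupp.single (n + 1) 1 := by
  simp [d, Finsupp.mapDomain_single]

lemma π_comp_d : (π R s).comp (d R s) = 0 := by
  ext n
  simp only [LinearMap.comp_apply, Finsupp.lsingle_apply, d_single, map_sub, map_smul,
    π_single, one_smul, LinearMap.zero_apply]
  rw [← smul_u R s n]
  abel

lemma d_injective : Function.Injective (d R s) := by
  rw [injective_iff_map_eq_zero]
  intro x hx
  have h0 : x 0 = 0 := by rw [← d_apply_zero R s x, hx]; rfl
  have hs : ∀ n, x (n + 1) = s * x n := by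
    intro n
    have := d_apply_succ R s x n
    rw [hx] at this
    have : (0 : R) = x (n + 1) - s * x n := this
    linear_combination -this
  ext n
  induction n with
  | zero => simpa using h0
  | succ n ih => simp [hs n, ih]

lemma π_surjective : Function.Surjective (π R s) := by
  intro z
  induction z using Localization.induction_on with
  | H p =>
    obtain ⟨r, v⟩ := p
    obtain ⟨n, hn⟩ := v.2
    refine ⟨Finsupp.single n r, ?_⟩
    rw [π_single, u, Localization.smul_mk]
    congr 1
    · exact mul_one r
    · exact Subtype.ext hn

/-- partial sums: `p x m = ∑_{j ≤ m} s^(m-j) x j` -/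
def p (x : F R) : ℕ → R
  | 0 => x 0
  | m + 1 => s * p x m + x (m + 1)

lemma p_congr (x y : F R) (m : ℕ) (h : ∀ j ≤ m, x j = y j) : p R s x m = p R s y m := by
  induction m with
  | zero => exact h 0 le_rfl
  | succ m ih =>
    simp only [p, ih (fun j hj => h j (hj.trans (Nat.le_succ m))), h (m + 1) le_rfl]

lemma π_eq_p_smul (m : ℕ) : ∀ x : F R, (∀ j, m < j → x j = 0) →
    π R s x = p R s x m • u R s m := by
  induction m with
  | zero =>
    intro x hx
    have : x = Finsupp.single 0 (x 0) := by
      ext j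
      cases j with
      | zero => simp
      | succ j => simp [hx _ (Nat.succ_pos j), Ne.symm (Nat.succ_ne_zero j)]
    conv_lhs => rw [this, π_single]
    have : p R s x 0 = x 0 := rfl
    rw [this]
  | succ m ih =>
    intro x hx
    have hdec : Finsupp.single (m + 1) (x (m + 1)) + Finsupp.erase (m + 1) x = x :=
      Finsupp.single_add_erase _ _
    have herase : ∀ j, m < j → Finsupp.erase (m + 1) x j = 0 := by
      intro j hj
      rcases eq_or_ne j (m + 1) with rfl | hne
      · simp
      · rw [Finsupp.erase_ne hne]
        exact hx j (lt_of_le_of_ne (Nat.succ_le_of_lt hj) (Ne.symm hne))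
    calc π R s x = π R s (Finsupp.single (m + 1) (x (m + 1)) + Finsupp.erase (m + 1) x) := by
          rw [hdec]
      _ = x (m + 1) • u R s (m + 1) + p R s (Finsupp.erase (m + 1) x) m • u R s m := by
          rw [map_add, π_single, ih _ herase]
      _ = x (m + 1) • u R s (m + 1) + p R s x m • u R s m := by
          rw [p_congr R s (Finsupp.erase (m + 1) x) x m
            (fun j hj => Finsupp.erase_ne (by omega))]
      _ = p R s x (m + 1) • u R s (m + 1) := by
          rw [← smul_u R s m, smul_comm, ← smul_assoc, p]
          rw [smul_eq_mul, ← add_smul, add_comm]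
end ContraAux
end ContraAux

section ContraAux2
namespace ContraAux
variable (R : Type) [CommRing R] (s : R)

lemma exists_pow_mul_eq_zero_of_smul_u_eq_zero (c : R) (m : ℕ) (h : c • u R s m = 0) :
    ∃ k, s ^ k * c = 0 := by
  rw [u, Localization.smul_mk] at h
  rw [show (0 : L R s) = Localization.mk 0 1 by rw [Localization.mk_zero]] at h
  rw [Localization.mk_eq_mk_iff, Localization.r_iff_exists] at h
  obtain ⟨t, ht⟩ := h
  obtain ⟨k, hk⟩ := t.2
  refine ⟨k, ?_⟩
  simpa [hk, mul_comm] using ht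

lemma exact_mid (x : ContraAux.F R) (hx : π R s x = 0) : ∃ y, d R s y = x := by
  classical
  -- choose N with x j = 0 for j ≥ N
  obtain ⟨N, hN⟩ : ∃ N, ∀ j, N < j → x j = 0 :=
    ⟨x.support.sup id, fun j hj => by
      by_contra h
      have := Finset.le_sup (f := id) (Finsupp.mem_support_iff.2 h)
      simp only [id] at this
      omega⟩
  have hπ : p R s x N • u R s N = 0 := by rw [← π_eq_p_smul R s N x hN, hx]
  obtain ⟨k, hk⟩ := exists_pow_mul_eq_zero_of_smul_u_eq_zero R s _ N hπ
  -- p x vanishes from N + k on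
  have hp : ∀ i, p R s x (N + i) = s ^ i * p R s x N := by
    intro i
    induction i with
    | zero => simp
    | succ i ih =>
      have : N + (i + 1) = (N + i) + 1 := by omega
      rw [this]
      show s * p R s x (N + i) + x ((N + i) + 1) = _
      rw [ih, hN _ (by omega), pow_succ]
      ring
  have hp0 : ∀ m, N + k ≤ m → p R s x m = 0 := by
    intro m hm
    obtain ⟨i, rfl⟩ : ∃ i, m = (N + k) + i := ⟨m - (N + k), by omega⟩
    induction i with
    | zero => rw [Nat.add_zero, hp k, hk]
    | succ i ih =>
      show s * p R s x ((N + k) + i) + x (((N + k) + i) + 1) = 0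
      rw [ih (by omega), hN _ (by omega)]
      ring
  refine ⟨Finsupp.onFinset (Finset.range (N + k + 1)) (p R s x) ?_, ?_⟩
  · intro a ha
    rw [Finset.mem_range]
    by_contra h
    exact ha (hp0 _ (by omega))
  · ext n
    cases n with
    | zero =>
      rw [d_apply_zero]
      show p R s x 0 = x 0
      rfl
    | succ n =>
      rw [d_apply_succ]
      show p R s x (n + 1) - s * p R s x n = x (n + 1)
      show s * p R s x n + x (n + 1) - s * p R s x n = x (n + 1)
      ring

end ContraAux
end ContraAux2

section ContraAux3
namespace ContraAux
variable (R : Type) [CommRing R] (s : R) (N : Type) [AddCommGroup N] [Module R N]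

/-- the map `(xₙ) ↦ (xₙ - s·xₙ₊₁)` -/
def T : (ℕ → N) →ₗ[R] (ℕ → N) where
  toFun x n := x n - s • x (n + 1)
  map_add' x y := by funext n; simp [smul_add]; abel
  map_smul' r x := by funext n; simp only [smul_sub, RingHom.id_apply, Pi.smul_apply, smul_comm r s]

lemma T_apply (x : ℕ → N) (n : ℕ) : T R s N x n = x n - s • x (n + 1) := rfl

/-- from a `T`-cycle, build a linear map `L → N` sending `uₙ` to `xₙ`. -/
lemma exists_hom_of_T_ker (x : ℕ → N) (hx : T R s N x = 0) :
    ∃ f : L R s →ₗ[R] N, ∀ n, f (u R s n) = x n := by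
  have hx' : ∀ n, x n = s • x (n + 1) := by
    intro n
    have := congrFun hx n
    rw [T_apply] at this
    have : x n - s • x (n + 1) = 0 := this
    linear_combination (norm := module) this
  set φ : F R →ₗ[R] N := Finsupp.lsum ℕ fun n => LinearMap.toSpanSingleton R N (x n) with hφ
  have hφsingle : ∀ n r, φ (Finsupp.single n r) = r • x n := by intro n r; simp [hφ]
  have hle : LinearMap.ker (π R s) ≤ LinearMap.ker φ := by
    intro z hz
    obtain ⟨y, rfl⟩ := exact_mid R s z hz
    rw [LinearMap.mem_ker]
    have : φ.comp (d R s) = 0 := by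
      ext n
      simp only [LinearMap.comp_apply, Finsupp.lsingle_apply, d_single, map_sub, map_smul,
        hφsingle, one_smul, LinearMap.zero_apply]
      rw [hx' n]
      abel
    exact DFunLike.congr_fun this y
  set e := LinearMap.quotKerEquivOfSurjective _ (π_surjective R s) with he
  refine ⟨(Submodule.liftQ _ φ hle).comp (e.symm : L R s →ₗ[R] (F R ⧸ LinearMap.ker (π R s))),
    fun n => ?_⟩
  have h1 : e (Submodule.Quotient.mk (Finsupp.single n 1)) = u R s n := by
    show (π R s) (Finsupp.single n 1) = u R s n
    rw [π_single, one_smul]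
  have h2 : e.symm (u R s n) = Submodule.Quotient.mk (Finsupp.single n 1) := by
    rw [← h1, LinearEquiv.symm_apply_apply]
  simp only [LinearMap.comp_apply, LinearEquiv.coe_coe, h2, Submodule.liftQ_apply, hφsingle,
    one_smul]

lemma subsingleton_hom_iff_injective :
    Subsingleton (L R s →ₗ[R] N) ↔ Function.Injective (T R s N) := by
  constructor
  · intro h
    rw [injective_iff_map_eq_zero]
    intro x hx
    obtain ⟨f, hf⟩ := exists_hom_of_T_ker R s N x hx
    funext n
    rw [← hf n, Subsingleton.elim f 0]
    rfl
  · intro h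
    constructor
    intro f g
    suffices h0 : ∀ f : L R s →ₗ[R] N, f = 0 by rw [h0 f, h0 g]
    intro f
    have hker : (fun n => f (u R s n)) = 0 := by
      apply h
      rw [map_zero]
      funext n
      rw [T_apply, ← map_smul, smul_u]
      simp
    ext z
    induction z using Localization.induction_on with
    | H p =>
      obtain ⟨r, v⟩ := p
      obtain ⟨n, hn⟩ := v.2
      have : Localization.mk r v = r • u R s n := by
        rw [u, Localization.smul_mk, smul_eq_mul, mul_one]
        congr 1
        exact Subtype.ext hn.symm
      rw [this, map_smul]
      have := congrFun hker n
      simp only [Pi.zero_apply] at this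
      simp [this]

end ContraAux
end ContraAux3

noncomputable section ContraCat
namespace ContraAux
open CategoryTheory Opposite Limits
variable (R : Type) [CommRing R] (s : R)

/-- the modules of the resolution -/
def PX : ℕ → ModuleCat R
  | 0 => ModuleCat.of R (F R)
  | 1 => ModuleCat.of R (F R)
  | _ + 2 => ModuleCat.of R PUnit

instance PX_projective (n : ℕ) : Projective (PX R n) := by
  match n with
  | 0 => exact ModuleCat.projective_of_free Finsupp.basisSingleOne
  | 1 => exact ModuleCat.projective_of_free Finsupp.basisSingleOne
  | n + 2 => exact (ModuleCat.isZero_of_subsingleton (ModuleCat.of R PUnit)).projective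

/-- the resolution complex -/
def Pcomplex : ChainComplex (ModuleCat R) ℕ :=
  ChainComplex.of (PX R)
    (fun n => match n with
      | 0 => ModuleCat.ofHom (d R s)
      | _ + 1 => 0)
    (by rintro (_ | n) <;> exact Limits.zero_comp)

lemma Pcomplex_d_1_0 : (Pcomplex R s).d 1 0 = ModuleCat.ofHom (d R s) := by
  simp [Pcomplex, ChainComplex.of.d]
  exact Category.id_comp _

/-- the augmentation as chain map -/
def πres : Pcomplex R s ⟶ (ChainComplex.single₀ (ModuleCat R)).obj (ModuleCat.of R (L R s)) :=
  (ChainComplex.toSingle₀Equiv _ _).symm ⟨ModuleCat.ofHom (π R s), by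
    rw [Pcomplex_d_1_0]
    exact congrArg ModuleCat.ofHom (π_comp_d R s)⟩

lemma πres_f_0 : (πres R s).f 0 = ModuleCat.ofHom (π R s) := by
  simp [πres]
  rfl

/-- the projective resolution of `L = R[1/s]` -/
def Pres : ProjectiveResolution (ModuleCat.of R (L R s)) where
  complex := Pcomplex R s
  projective := PX_projective R
  π := πres R s
  quasiIso := ⟨fun n => by
    cases n with
    | zero =>
      rw [ChainComplex.quasiIsoAt₀_iff, ShortComplex.quasiIso_iff_of_zeros']
      · constructor
        · rw [ShortComplex.moduleCat_exact_iff]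
          intro x hx
          dsimp at x hx ⊢
          change ((πres R s).f 0).hom x = 0 at hx
          rw [πres_f_0] at hx
          obtain ⟨y, hy⟩ := exact_mid R s x hx
          refine ⟨y, ?_⟩
          change ((Pcomplex R s).d 1 0).hom y = x
          rw [Pcomplex_d_1_0]
          exact hy
        · change Epi ((πres R s).f 0)
          rw [πres_f_0]
          exact (ModuleCat.epi_iff_surjective (ModuleCat.ofHom (π R s))).2 (π_surjective R s)
      all_goals rfl
    | succ n =>
      rw [quasiIsoAt_iff_exactAt']
      · cases n with
        | zero =>
          rw [HomologicalComplex.exactAt_iff' _ 2 1 0 (by simp) (by simp)]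
          rw [ShortComplex.moduleCat_exact_iff]
          intro x hx
          dsimp at x hx ⊢
          change ((Pcomplex R s).d 1 0).hom x = 0 at hx
          rw [Pcomplex_d_1_0] at hx
          have hx0 : x = 0 := (injective_iff_map_eq_zero _).1 (d_injective R s) x hx
          exact ⟨0, by rw [map_zero, hx0]⟩
        | succ n =>
          rw [HomologicalComplex.exactAt_iff' _ (n + 3) (n + 2) (n + 1) (by simp) (by simp)]
          exact ShortComplex.exact_of_isZero_X₂ _
            (ModuleCat.isZero_of_subsingleton (ModuleCat.of R PUnit))
      · apply ChainComplex.exactAt_succ_single_obj⟩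
end ContraAux
end ContraCat

noncomputable section ContraExt
namespace ContraAux
open CategoryTheory Opposite Limits
variable (R : Type) [CommRing R] (s : R) (N : Type) [AddCommGroup N] [Module R N]

lemma subsingleton_of_isZero {X : ModuleCat R} (h : IsZero X) : Subsingleton X := by
  refine ⟨fun a b => ?_⟩
  have h1 : (𝟙 X : X ⟶ X) = 0 := h.eq_of_src _ _
  have ha : a = (𝟙 X : X ⟶ X) a := rfl
  have hb : b = (𝟙 X : X ⟶ X) b := rfl
  rw [ha, hb, h1]
  rfl

lemma surj_precomp_iff :
    Function.Surjective (fun f : F R →ₗ[R] N => f.comp (d R s)) ↔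
      Function.Surjective (T R s N) := by
  constructor
  · intro h y
    obtain ⟨f, hf⟩ := h (Finsupp.lsum ℕ fun n => LinearMap.toSpanSingleton R N (y n))
    have hf' : f.comp (d R s) = Finsupp.lsum ℕ fun n => LinearMap.toSpanSingleton R N (y n) := hf
    refine ⟨fun n => f (Finsupp.single n 1), ?_⟩
    funext n
    rw [T_apply, ← map_smul, ← map_sub, ← d_single, ← LinearMap.comp_apply, hf']
    simp
  · intro h g
    obtain ⟨x, hx⟩ := h (fun n => g (Finsupp.single n 1))
    refine ⟨Finsupp.lsum ℕ fun n => LinearMap.toSpanSingleton R N (x n), ?_⟩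
    ext n
    simp only [LinearMap.comp_apply, Finsupp.lsingle_apply, d_single, map_sub, map_smul]
    have h2 := congrFun hx n
    rw [T_apply] at h2
    simp only [Finsupp.lsum_single, LinearMap.toSpanSingleton_apply, one_smul]
    rw [← h2]

lemma ext_subsingleton_iff :
    Subsingleton (((Ext R (ModuleCat R) 1).obj (op (ModuleCat.of R (L R s)))).obj
        (ModuleCat.of R N)) ↔
      Function.Surjective (T R s N) := by
  set Q := (Pcomplex R s).linearYonedaObj R (ModuleCat.of R N) with hQ
  have e : (((Ext R (ModuleCat R) 1).obj (op (ModuleCat.of R (L R s)))).obj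
      (ModuleCat.of R N)) ≃ (Q.homology 1) :=
    ((Pres R s).isoExt 1 (ModuleCat.of R N)).toLinearEquiv.toEquiv
  rw [Equiv.subsingleton_congr e]
  have hzero : Subsingleton (Q.X 2) := by
    show Subsingleton (PX R 2 ⟶ ModuleCat.of R N)
    constructor
    intro f g
    ext x
    rw [Subsingleton.elim (α := PUnit.{1}) x (0 : PX R 2), map_zero, map_zero]
  have hdQ : ∀ f : F R →ₗ[R] N, (Q.sc' 0 1 2).f (ModuleCat.ofHom f : PX R 0 ⟶ ModuleCat.of R N) =
      (ModuleCat.ofHom (f.comp (d R s)) : PX R 1 ⟶ ModuleCat.of R N) := by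
    intro f
    have h0 : (Q.sc' 0 1 2).f (ModuleCat.ofHom f : PX R 0 ⟶ ModuleCat.of R N) =
      (Pcomplex R s).d 1 0 ≫ ModuleCat.ofHom f := rfl
    rw [h0, Pcomplex_d_1_0]
    rfl
  have key : Subsingleton (Q.homology 1) ↔ (Q.sc' 0 1 2).Exact := by
    rw [← HomologicalComplex.exactAt_iff' _ 0 1 2 (by simp) (by simp),
      HomologicalComplex.exactAt_iff_isZero_homology]
    exact ⟨fun h => by
        have := h
        exact ModuleCat.isZero_of_subsingleton _,
      fun h => subsingleton_of_isZero R h⟩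
  rw [key, ShortComplex.moduleCat_exact_iff, ← surj_precomp_iff R s N]
  constructor
  · intro h g
    obtain ⟨f, hf⟩ := h (ModuleCat.ofHom g : PX R 1 ⟶ ModuleCat.of R N) (@Subsingleton.elim _ hzero _ _)
    exact ⟨f.hom, by show f.hom ∘ₗ d R s = g; exact congrArg ModuleCat.Hom.hom ((hdQ f.hom).symm.trans hf)⟩
  · intro h x hx
    obtain ⟨f, hf⟩ := h x.hom
    exact ⟨ModuleCat.ofHom f, by rw [hdQ f]; exact congrArg ModuleCat.ofHom hf⟩

end ContraAux
end ContraExt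

open CategoryTheory Opposite

/-- Let `R` be a commutative ring, `s ∈ R`, `M` an arbitrary `R`-module
and `C` an `s`-contramodule `R`-module. Then `Hom_R(M, C)` is an `s`-contramodule. -/
theorem hom_into_contramodule_isContramodule
    (R : Type) [CommRing R] (s : R) (M C : Type) [AddCommGroup M] [Module R M]
    [AddCommGroup C] [Module R C]
    (hC : Subsingleton (Localization.Away s →ₗ[R] C) ∧
      Subsingleton (((Ext R (ModuleCat R) 1).obj
        (op (ModuleCat.of R (Localization.Away s)))).obj (ModuleCat.of R C))) :
    Subsingleton (Localization.Away s →ₗ[R] (M →ₗ[R] C)) ∧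
      Subsingleton (((Ext R (ModuleCat R) 1).obj
        (op (ModuleCat.of R (Localization.Away s)))).obj
        (ModuleCat.of R (M →ₗ[R] C))) := by
  obtain ⟨h1, h2⟩ := hC
  rw [ContraAux.subsingleton_hom_iff_injective] at h1
  rw [ContraAux.ext_subsingleton_iff] at h2
  rw [ContraAux.subsingleton_hom_iff_injective, ContraAux.ext_subsingleton_iff]
  set TC := ContraAux.T R s C with hTC
  -- the bijection on `ℕ → C`
  let e : (ℕ → C) ≃ₗ[R] (ℕ → C) := LinearEquiv.ofBijective TC ⟨h1, h2⟩
  constructor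
  · -- injectivity
    rw [injective_iff_map_eq_zero]
    intro x hx
    funext n
    ext m
    have hxm : TC (fun k => x k m) = 0 := by
      funext k
      have := congrFun hx k
      rw [ContraAux.T_apply] at this ⊢
      calc x k m - s • x (k + 1) m = (x k - s • x (k + 1)) m := by
            simp
        _ = 0 := by rw [this]; rfl
    have := h1 (by rw [hxm, map_zero] : TC (fun k => x k m) = TC 0)
    have := congrFun this n
    simpa using this
  · -- surjectivity
    intro y
    set g : M →ₗ[R] (ℕ → C) :=
      (e.symm : (ℕ → C) →ₗ[R] (ℕ → C)).comp (LinearMap.pi fun n => y n) with hg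
    refine ⟨fun n => (LinearMap.proj n).comp g, ?_⟩
    funext n
    ext m
    rw [ContraAux.T_apply]
    have h3 : TC (g m) = (LinearMap.pi fun n => y n) m := by
      show e (e.symm _) = _
      rw [LinearEquiv.apply_symm_apply]
    calc ((LinearMap.proj n).comp g) m - s • ((LinearMap.proj (n + 1)).comp g) m
        = g m n - s • g m (n + 1) := rfl
      _ = TC (g m) n := by rw [ContraAux.T_apply]
      _ = y n m := by rw [h3]; simp
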